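/- If U is an open normal subgroup of finite index in a topological group G, then KO(U) = KO(G). -/

import Mathlib

def KO (G : Type*) [Group G] [TopologicalSpace G] : Subgroup G :=
  ⨅ (n : ℕ) (ρ : G →* GL (Fin n) ℂ) (_ : Continuous ρ), ρ.ker

lemma mem_KO_iff {G : Type*} [Group G] [TopologicalSpace G] {g : G} :
    g ∈ KO G ↔ ∀ (n : ℕ) (ρ : G →* GL (Fin n) ℂ), Continuous ρ → ρ g = 1 := by
  rw [KO]
  simp only [Subgroup.mem_iInf, MonoidHom.mem_ker]

namespace KOAux

variable {G : Type*} [Group G] (U : Subgroup G) [U.Normal]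

open scoped Classical in
/-- A section of `G ⧸ U → G` sending `1` to `1`. -/
noncomputable def sec (q : G ⧸ U) : G :=
  if q = (1 : G ⧸ U) then 1 else Quotient.out q

lemma sec_spec (q : G ⧸ U) : ((sec U q : G) : G ⧸ U) = q := by
  unfold sec
  split
  · simp [*]
  · exact QuotientGroup.out_eq' q

lemma sec_one : sec U (1 : G ⧸ U) = 1 := by
  unfold sec
  simp

lemma mem_iff (g : G) (q q' : G ⧸ U) :
    (sec U q)⁻¹ * g * sec U q' ∈ U ↔ q = ((g * sec U q' : G) : G ⧸ U) := by
  rw [mul_assoc, ← QuotientGroup.eq, sec_spec]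

lemma mem_iff' (g : G) (q r : G ⧸ U) :
    (sec U q)⁻¹ * g * sec U r ∈ U ↔ r = ((g⁻¹ * sec U q : G) : G ⧸ U) := by
  rw [← U.inv_mem_iff,
    show ((sec U q)⁻¹ * g * sec U r)⁻¹ = (sec U r)⁻¹ * g⁻¹ * sec U q by group, mem_iff]

variable [Fintype (G ⧸ U)] [DecidableEq (G ⧸ U)] {n : ℕ} (σ : ↥U →* GL (Fin n) ℂ)

open scoped Classical in
/-- The matrix of the induced representation. -/
noncomputable def indM (g : G) :
    Matrix ((G ⧸ U) × Fin n) ((G ⧸ U) × Fin n) ℂ := fun p p' =>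
  if h : (sec U p.1)⁻¹ * g * sec U p'.1 ∈ U
  then (σ ⟨(sec U p.1)⁻¹ * g * sec U p'.1, h⟩ : Matrix (Fin n) (Fin n) ℂ) p.2 p'.2 else 0

lemma indM_one : indM U σ 1 = 1 := by
  ext ⟨q, i⟩ ⟨q', j⟩
  by_cases hq : q = q'
  · subst hq
    have h1 : (sec U q)⁻¹ * 1 * sec U q ∈ U := by
      rw [show (sec U q)⁻¹ * 1 * sec U q = 1 by group]; exact U.one_mem
    have h2 : (⟨(sec U q)⁻¹ * 1 * sec U q, h1⟩ : U) = 1 := by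
      ext; show (sec U q)⁻¹ * 1 * sec U q = 1; group
    simp only [indM]
    rw [dif_pos h1, h2, map_one]
    simp [Matrix.one_apply, Prod.ext_iff]
  · have h1 : ¬ ((sec U q)⁻¹ * 1 * sec U q' ∈ U) := by
      rw [mem_iff]; simpa [sec_spec] using hq
    simp only [indM]
    rw [dif_neg h1]
    simp [Matrix.one_apply, Prod.ext_iff, hq]

lemma indM_mul (g h : G) : indM U σ (g * h) = indM U σ g * indM U σ h := by
  ext ⟨q, i⟩ ⟨q', j⟩
  rw [Matrix.mul_apply, Fintype.sum_prod_type]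
  set r₀ : G ⧸ U := ((g⁻¹ * sec U q : G) : G ⧸ U) with hr₀
  rw [Finset.sum_eq_single r₀]
  · have hA : (sec U q)⁻¹ * g * sec U r₀ ∈ U := (mem_iff' U g q r₀).2 rfl
    by_cases hB : (sec U r₀)⁻¹ * h * sec U q' ∈ U
    · have hC : (sec U q)⁻¹ * (g * h) * sec U q' ∈ U := by
        have := U.mul_mem hA hB
        rwa [show ((sec U q)⁻¹ * g * sec U r₀) * ((sec U r₀)⁻¹ * h * sec U q')
          = (sec U q)⁻¹ * (g * h) * sec U q' by group] at this
      have hprod : σ ⟨(sec U q)⁻¹ * (g * h) * sec U q', hC⟩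
          = σ ⟨(sec U q)⁻¹ * g * sec U r₀, hA⟩ * σ ⟨(sec U r₀)⁻¹ * h * sec U q', hB⟩ := by
        rw [← map_mul]
        congr 1
        ext
        show (sec U q)⁻¹ * (g * h) * sec U q'
          = ((sec U q)⁻¹ * g * sec U r₀) * ((sec U r₀)⁻¹ * h * sec U q')
        group
      simp only [indM]
      rw [dif_pos hC, hprod]
      simp only [dif_pos hA, dif_pos hB]
      rw [show ((σ ⟨(sec U q)⁻¹ * g * sec U r₀, hA⟩ * σ ⟨(sec U r₀)⁻¹ * h * sec U q', hB⟩ :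
          GL (Fin n) ℂ) : Matrix (Fin n) (Fin n) ℂ)
        = (σ ⟨(sec U q)⁻¹ * g * sec U r₀, hA⟩ : Matrix (Fin n) (Fin n) ℂ)
          * (σ ⟨(sec U r₀)⁻¹ * h * sec U q', hB⟩ : Matrix (Fin n) (Fin n) ℂ) from rfl,
        Matrix.mul_apply]
    · have hC : ¬ ((sec U q)⁻¹ * (g * h) * sec U q' ∈ U) := by
        intro hC
        apply hB
        have := U.mul_mem (U.inv_mem hA) hC
        rwa [show ((sec U q)⁻¹ * g * sec U r₀)⁻¹ * ((sec U q)⁻¹ * (g * h) * sec U q')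
          = (sec U r₀)⁻¹ * h * sec U q' by group] at this
      simp only [indM]
      rw [dif_neg hC]
      simp only [dif_neg hB, mul_zero, Finset.sum_const_zero]
  · intro r _ hr
    apply Finset.sum_eq_zero
    intro k _
    have hm : ¬ ((sec U q)⁻¹ * g * sec U r ∈ U) := fun hm => hr ((mem_iff' U g q r).1 hm)
    simp only [indM]
    rw [dif_neg hm, zero_mul]
  · intro hr; exact absurd (Finset.mem_univ r₀) hr

/-- The induced representation as a homomorphism to units of the matrix ring. -/
noncomputable def indGL : G →* (Matrix ((G ⧸ U) × Fin n) ((G ⧸ U) × Fin n) ℂ)ˣ where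
  toFun g :=
    { val := indM U σ g
      inv := indM U σ g⁻¹
      val_inv := by rw [← indM_mul, mul_inv_cancel, indM_one]
      inv_val := by rw [← indM_mul, inv_mul_cancel, indM_one] }
  map_one' := Units.ext (indM_one U σ)
  map_mul' g h := Units.ext (indM_mul U σ g h)

lemma indGL_val (g : G) : ((indGL U σ g : (Matrix ((G ⧸ U) × Fin n) ((G ⧸ U) × Fin n) ℂ)ˣ) :
    Matrix ((G ⧸ U) × Fin n) ((G ⧸ U) × Fin n) ℂ) = indM U σ g := rfl

variable [TopologicalSpace G] [IsTopologicalGroup G]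

lemma indM_continuous (hopen : IsOpen (U : Set G)) (hσ : Continuous σ) :
    Continuous (indM U σ) := by
  apply continuous_matrix
  rintro ⟨q, i⟩ ⟨q', j⟩
  set a := (sec U q)⁻¹ with ha
  set b := sec U q' with hb
  have hab : Continuous fun g : G => a * g * b := by continuity
  have hentry : Continuous fun u : U => ((σ u : Matrix (Fin n) (Fin n) ℂ)) i j :=
    ((Units.continuous_iff.mp hσ).1).matrix_elem i j
  rw [continuous_iff_continuousAt]
  intro g₀
  by_cases h0 : a * g₀ * b ∈ U
  · have hS : IsOpen {g : G | a * g * b ∈ U} := hopen.preimage hab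
    apply ContinuousOn.continuousAt _ (hS.mem_nhds h0)
    rw [continuousOn_iff_continuous_restrict]
    have hres : Set.restrict {g : G | a * g * b ∈ U}
        (fun g => indM U σ g (q, i) (q', j))
        = fun x => ((σ ⟨a * x.1 * b, x.2⟩ : Matrix (Fin n) (Fin n) ℂ)) i j := by
      funext x
      simp only [Set.restrict, indM]
      exact dif_pos x.2
    refine (congrArg Continuous hres).mpr ?_
    exact hentry.comp (Continuous.subtype_mk ((hab.comp continuous_subtype_val)) _)
  · have hS : IsOpen {g : G | ¬ (a * g * b ∈ U)} := by
      have hcl : IsClosed (U : Set G) := Subgroup.isClosed_of_isOpen U hopen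
      exact (hcl.preimage hab).isOpen_compl
    apply ContinuousOn.continuousAt _ (hS.mem_nhds h0)
    rw [continuousOn_iff_continuous_restrict]
    have hres : Set.restrict {g : G | ¬ (a * g * b ∈ U)}
        (fun g => indM U σ g (q, i) (q', j)) = fun _ => 0 := by
      funext x
      simp only [Set.restrict, indM]
      exact dif_neg x.2
    refine (congrArg Continuous hres).mpr ?_
    exact continuous_const

/-- If `g` is killed by every continuous finite-dimensional representation of `G`,
then `indGL U σ g = 1`. -/
lemma indGL_eq_one (hopen : IsOpen (U : Set G))
    (g : G) (hg : ∀ (m : ℕ) (ρ : G →* GL (Fin m) ℂ), Continuous ρ → ρ g = 1)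
    (hσ : Continuous σ) : indGL U σ g = 1 := by
  classical
  set m := Fintype.card ((G ⧸ U) × Fin n) with hm
  let e : ((G ⧸ U) × Fin n) ≃ Fin m := Fintype.equivFin _
  let φ : (Matrix ((G ⧸ U) × Fin n) ((G ⧸ U) × Fin n) ℂ)ˣ ≃* (Matrix (Fin m) (Fin m) ℂ)ˣ :=
    Units.mapEquiv (Matrix.reindexAlgEquiv ℂ ℂ e).toRingEquiv.toMulEquiv
  let ρ : G →* GL (Fin m) ℂ := φ.toMonoidHom.comp (indGL U σ)
  have hρval : ∀ x : G, ((ρ x : GL (Fin m) ℂ) : Matrix (Fin m) (Fin m) ℂ)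
      = (indM U σ x).submatrix e.symm e.symm := by
    intro x
    show ((φ (indGL U σ x) : (Matrix (Fin m) (Fin m) ℂ)ˣ) : Matrix (Fin m) (Fin m) ℂ) = _
    rw [Units.coe_mapEquiv]
    show (Matrix.reindexAlgEquiv ℂ ℂ e) (indM U σ x) = _
    rw [Matrix.reindexAlgEquiv_apply, Matrix.reindex_apply]
  have hρc : Continuous ρ := by
    rw [Units.continuous_iff]
    constructor
    · show Continuous fun x : G => ((ρ x : GL (Fin m) ℂ) : Matrix (Fin m) (Fin m) ℂ)
      rw [funext hρval]
      exact (indM_continuous U σ hopen hσ).matrix_submatrix _ _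
    · have hval : (fun x : G => (((ρ x)⁻¹ : GL (Fin m) ℂ) : Matrix (Fin m) (Fin m) ℂ))
          = fun x => (indM U σ x⁻¹).submatrix e.symm e.symm := by
        funext x
        rw [← map_inv ρ x]
        exact hρval x⁻¹
      show Continuous fun x : G => (((ρ x)⁻¹ : GL (Fin m) ℂ) : Matrix (Fin m) (Fin m) ℂ)
      rw [hval]
      exact ((indM_continuous U σ hopen hσ).comp continuous_inv).matrix_submatrix _ _
  have h1 : ρ g = 1 := hg m ρ hρc
  have h2 : φ (indGL U σ g) = 1 := h1
  exact φ.injective (h2.trans (map_one φ).symm)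

end KOAux

open KOAux in
theorem KO_open_finiteIndex {G : Type*} [Group G] [TopologicalSpace G] [IsTopologicalGroup G]
    (U : Subgroup G) [U.Normal] (hopen : IsOpen (U : Set G)) [U.FiniteIndex] :
    (KO U).map U.subtype = KO G := by
  classical
  haveI : Fintype (G ⧸ U) := Fintype.ofFinite _
  apply le_antisymm
  · rintro x hx
    obtain ⟨u, hu, rfl⟩ := Subgroup.mem_map.mp hx
    rw [mem_KO_iff] at hu ⊢
    intro n ρ hρ
    exact hu n (ρ.comp U.subtype) (hρ.comp continuous_subtype_val)
  · intro g hg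
    rw [mem_KO_iff] at hg
    -- Step 1 : `g ∈ U`, using the representation induced from the trivial rep of `U`.
    have hgU : g ∈ U := by
      set σ₁ : ↥U →* GL (Fin 1) ℂ := 1 with hσ₁def
      have hσ₁ : Continuous σ₁ := continuous_const
      have h1 : indGL U σ₁ g = 1 := indGL_eq_one U σ₁ hopen g hg hσ₁
      have hM : indM U σ₁ g = 1 := congrArg Units.val h1
      by_contra hgU
      have hmem : ¬ ((sec U (1 : G ⧸ U))⁻¹ * g * sec U (1 : G ⧸ U) ∈ U) := by
        rw [sec_one]
        simpa using hgU
      have hent := Matrix.ext_iff.mpr hM ((1 : G ⧸ U), (0 : Fin 1)) ((1 : G ⧸ U), (0 : Fin 1))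
      rw [show indM U σ₁ g ((1 : G ⧸ U), (0 : Fin 1)) ((1 : G ⧸ U), (0 : Fin 1))
          = 0 from dif_neg hmem] at hent
      simp [Matrix.one_apply] at hent
    -- Step 2 : `⟨g, hgU⟩ ∈ KO U`.
    refine Subgroup.mem_map.mpr ⟨⟨g, hgU⟩, ?_, rfl⟩
    rw [mem_KO_iff]
    intro n σ hσ
    have h1 : indGL U σ g = 1 := indGL_eq_one U σ hopen g hg hσ
    have hM : indM U σ g = 1 := congrArg Units.val h1
    have hmem : (sec U (1 : G ⧸ U))⁻¹ * g * sec U (1 : G ⧸ U) ∈ U := by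
      rw [sec_one]; simpa using hgU
    have hsub : (⟨(sec U (1 : G ⧸ U))⁻¹ * g * sec U (1 : G ⧸ U), hmem⟩ : U) = ⟨g, hgU⟩ := by
      ext
      show (sec U (1 : G ⧸ U))⁻¹ * g * sec U (1 : G ⧸ U) = g
      rw [sec_one]; group
    apply Units.ext
    ext i j
    have hent := Matrix.ext_iff.mpr hM ((1 : G ⧸ U), i) ((1 : G ⧸ U), j)
    rw [show indM U σ g ((1 : G ⧸ U), i) ((1 : G ⧸ U), j)
        = (σ ⟨(sec U (1 : G ⧸ U))⁻¹ * g * sec U (1 : G ⧸ U), hmem⟩ :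
          Matrix (Fin n) (Fin n) ℂ) i j from dif_pos hmem, hsub] at hent
    rw [hent]
    simp [Matrix.one_apply, Prod.ext_iff]
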